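/- arXiv:2212.09294 — 5 statements merged into one kernel-verified Lean document; each statement's English description precedes it below -/
import Mathlib

section
/- The partial derivative of Φ(α,x) = −2 (log α)(log x) − Li₂(α²x) + Li₂(α²/x) with respect to α satisfies exp(α·∂Φ/∂α) = (1−α²x)²(x−α²)⁻², on a domain where the relevant functions are holomorphic. -/
open Complex

/-- for the potential function
`Φ(α,x) = −2 log α · log x − Li₂(α²x) + Li₂(α²/x)` of the figure-eight knot,
one has `exp(α · ∂Φ/∂α) = (1−α²x)²(x−α²)⁻²`, where `Li₂` is any function with
the dilogarithm derivative `Li₂'(z) = −log(1−z)/z` at the relevant points. -/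
theorem figure_eight_potential_alpha_derivative (Li2 : ℂ → ℂ) (α x : ℂ)
    (hα : α ≠ 0) (hx : x ≠ 0) (hα' : α ∈ Complex.slitPlane)
    (h1 : 1 - α ^ 2 * x ≠ 0) (h2 : x - α ^ 2 ≠ 0)
    (hLi1 : HasDerivAt Li2 (-Complex.log (1 - α ^ 2 * x) / (α ^ 2 * x)) (α ^ 2 * x))
    (hLi2 : HasDerivAt Li2 (-Complex.log (1 - α ^ 2 / x) / (α ^ 2 / x)) (α ^ 2 / x)) :
    ∃ d : ℂ,
      HasDerivAt
        (fun a : ℂ =>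
          -2 * Complex.log a * Complex.log x - Li2 (a ^ 2 * x) + Li2 (a ^ 2 / x)) d α ∧
      Complex.exp (α * d) = (1 - α ^ 2 * x) ^ 2 * (x - α ^ 2)⁻¹ ^ 2 := by
  have h2' : 1 - α ^ 2 / x ≠ 0 := by
    have h := div_ne_zero h2 hx
    rwa [sub_div, div_self hx] at h
  have hlog : HasDerivAt (fun a : ℂ => -2 * Complex.log a * Complex.log x)
      (-2 * α⁻¹ * Complex.log x) α := by
    simpa using (((Complex.hasDerivAt_log hα').const_mul (-2 : ℂ)).mul_const (Complex.log x))
  have hg1 : HasDerivAt (fun a : ℂ => a ^ 2 * x) (2 * α * x) α := by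
    simpa [mul_comm] using ((hasDerivAt_pow 2 α).mul_const x)
  have hg2 : HasDerivAt (fun a : ℂ => a ^ 2 / x) (2 * α / x) α := by
    simpa [mul_comm, div_eq_mul_inv] using ((hasDerivAt_pow 2 α).div_const x)
  have hc1 := hLi1.comp α hg1
  have hc2 := hLi2.comp α hg2
  refine ⟨_, (hlog.sub hc1).add hc2, ?_⟩
  have key : α * (-2 * α⁻¹ * Complex.log x -
      -Complex.log (1 - α ^ 2 * x) / (α ^ 2 * x) * (2 * α * x) +
      -Complex.log (1 - α ^ 2 / x) / (α ^ 2 / x) * (2 * α / x)) =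
      2 * Complex.log (1 - α ^ 2 * x) - 2 * Complex.log x -
        2 * Complex.log (1 - α ^ 2 / x) := by
    set L1 := Complex.log (1 - α ^ 2 * x)
    set L2 := Complex.log (1 - α ^ 2 / x)
    set Lx := Complex.log x
    have ha5 : α ^ 5 * α⁻¹ ^ 5 = 1 := by
      rw [← mul_pow, mul_inv_cancel₀ hα, one_pow]
    have hx2 : x ^ 2 * x⁻¹ ^ 2 = 1 := by
      rw [← mul_pow, mul_inv_cancel₀ hx, one_pow]
    field_simp
    ring
  rw [key]
  have e1 : ∀ z : ℂ, z ≠ 0 → Complex.exp (2 * Complex.log z) = z ^ 2 := by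
    intro z hz
    rw [two_mul, Complex.exp_add, Complex.exp_log hz, sq]
  rw [sub_sub, Complex.exp_sub, Complex.exp_add, e1 _ h1, e1 _ hx, e1 _ h2']
  have hxa : (1 - α ^ 2 / x) = (x - α ^ 2) / x := by field_simp
  rw [hxa]
  field_simp
end

section
/- In the Ore algebra ℚ(q,Q)[E] with commutation relation EQ = qQE, the operator X(q,E,Q) = (qQ/(1−q³Q²))E² + (1/(1−q³Q²) + 1/(1−qQ²) − 1)E + qQ/(1−qQ²) admits the two factorizations X = ((qQ/(1−q³Q²))E + 1/(1−qQ²))(E + qQ) and X = ((1/(1−q³Q²))E + qQ/(1−qQ²))(1 + QE). -/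
/-- in the Ore algebra `ℚ(q,Q)[E;σ]` with `EQ = qQE`, the operator
`X = (qQ/(1−q³Q²))E² + (1/(1−q³Q²) + 1/(1−qQ²) − 1)E + qQ/(1−qQ²)` admits the two
factorizations
`X = ((qQ/(1−q³Q²))E + 1/(1−qQ²))(E + qQ)` and
`X = ((1/(1−q³Q²))E + qQ/(1−qQ²))(1 + QE)`.
We model the Ore algebra by a (noncommutative) ring containing central `q`,
an element `Q` and a skew variable `E` with `E·Q = q·Q·E`, where `1−q³Q²` and
`1−qQ²` are invertible. -/
theorem ore_factorization_X {A : Type*} [Ring A] (q Q E : A)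
    (hq : ∀ a : A, q * a = a * q) (hEQ : E * Q = q * Q * E)
    [inst1 : Invertible (1 - q ^ 3 * Q ^ 2)] [inst2 : Invertible (1 - q * Q ^ 2)] :
    (q * Q * ⅟(1 - q ^ 3 * Q ^ 2) * E ^ 2 +
        (⅟(1 - q ^ 3 * Q ^ 2) + ⅟(1 - q * Q ^ 2) - 1) * E +
        q * Q * ⅟(1 - q * Q ^ 2) =
      (q * Q * ⅟(1 - q ^ 3 * Q ^ 2) * E + ⅟(1 - q * Q ^ 2)) * (E + q * Q)) ∧
    (q * Q * ⅟(1 - q ^ 3 * Q ^ 2) * E ^ 2 +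
        (⅟(1 - q ^ 3 * Q ^ 2) + ⅟(1 - q * Q ^ 2) - 1) * E +
        q * Q * ⅟(1 - q * Q ^ 2) =
      (⅟(1 - q ^ 3 * Q ^ 2) * E + q * Q * ⅟(1 - q * Q ^ 2)) * (1 + Q * E)) := by
  set u := ⅟(1 - q ^ 3 * Q ^ 2) with hu
  set v := ⅟(1 - q * Q ^ 2) with hv
  have cq : ∀ a : A, Commute q a := fun a => hq a
  have cQx1 : Commute Q (1 - q ^ 3 * Q ^ 2) :=
    (Commute.one_right Q).sub_right (((cq Q).symm.pow_right 3).mul_right ((Commute.refl Q).pow_right 2))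
  have cQx2 : Commute Q (1 - q * Q ^ 2) :=
    (Commute.one_right Q).sub_right ((cq Q).symm.mul_right ((Commute.refl Q).pow_right 2))
  have cQu : Commute Q u := cQx1.invOf_right
  have cQv : Commute Q v := cQx2.invOf_right
  -- reordering rules (canonical order: q, Q, u/v, E)
  have r1 : ∀ a : A, Q * (q * a) = q * (Q * a) := fun a => by
    rw [← mul_assoc, ← hq, mul_assoc]
  have r1' : Q * q = q * Q := (hq Q).symm
  have r2 : ∀ a : A, u * (q * a) = q * (u * a) := fun a => by
    rw [← mul_assoc, ← hq, mul_assoc]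
  have r2' : u * q = q * u := (hq u).symm
  have r3 : ∀ a : A, v * (q * a) = q * (v * a) := fun a => by
    rw [← mul_assoc, ← hq, mul_assoc]
  have r3' : v * q = q * v := (hq v).symm
  have r4 : ∀ a : A, E * (q * a) = q * (E * a) := fun a => by
    rw [← mul_assoc, ← hq, mul_assoc]
  have r4' : E * q = q * E := (hq E).symm
  have r5 : ∀ a : A, u * (Q * a) = Q * (u * a) := fun a => by
    rw [← mul_assoc, ← cQu.eq, mul_assoc]
  have r5' : u * Q = Q * u := cQu.eq.symm
  have r6 : ∀ a : A, v * (Q * a) = Q * (v * a) := fun a => by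
    rw [← mul_assoc, ← cQv.eq, mul_assoc]
  have r6' : v * Q = Q * v := cQv.eq.symm
  have r7' : E * Q = q * (Q * E) := by rw [hEQ, mul_assoc]
  have r7 : ∀ a : A, E * (Q * a) = q * (Q * (E * a)) := fun a => by
    rw [← mul_assoc, r7', mul_assoc, mul_assoc]
  -- key reductions
  have k1 : q ^ 3 * Q ^ 2 * u = u - 1 := by
    have h := mul_invOf_self (1 - q ^ 3 * Q ^ 2)
    rw [sub_mul, one_mul, ← hu] at h
    rw [← h]; abel
  have k2 : q * Q ^ 2 * v = v - 1 := by
    have h := mul_invOf_self (1 - q * Q ^ 2)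
    rw [sub_mul, one_mul, ← hv] at h
    rw [← h]; abel
  have k1' : q * (q * (q * (Q * (Q * (u * E))))) = u * E - E := by
    have h := congrArg (· * E) k1
    simp only [sub_mul, one_mul] at h
    rw [← h]
    simp only [pow_succ, pow_zero, one_mul, mul_assoc]
  have k2' : q * (Q * (Q * (v * E))) = v * E - E := by
    have h := congrArg (· * E) k2
    simp only [sub_mul, one_mul] at h
    rw [← h]
    simp only [pow_succ, pow_zero, one_mul, mul_assoc]
  constructor
  · simp only [pow_succ, pow_zero, one_mul, mul_add, add_mul, sub_mul, mul_one, one_mul,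
      mul_assoc, r1, r1', r2, r2', r3, r3', r4, r4', r5, r5', r6, r6', r7, r7', k1', k2']
    abel
  · simp only [pow_succ, pow_zero, one_mul, mul_add, add_mul, sub_mul, mul_one, one_mul,
      mul_assoc, r1, r1', r2, r2', r3, r3', r4, r4', r5, r5', r6, r6', r7, r7', k1', k2']
    abel
end

section
/- The third-order annihilating operator of the colored Jones polynomial of the figure-eight knot factors as (E−1)·α(q,E,Q)·(Q−1) in the Ore algebra ℚ(q,Q)[E;σ], where α(q,E,Q) = (1/(1+qQ))[ (qQ/(1−q³Q²))E² + (1/(1−q³Q²) + 1/(1−qQ²) + qQ − 1 − 1/(qQ))E + qQ/(1−qQ²) ]. Explicitly, expanding this product in E gives the stated third-order operator with coefficients c₃ = q⁴Q(−1+q³Q)/((q+q³Q)(q−q⁶Q²)), c₀ = q⁵Q(−q³+q³Q)/((q²+q³Q)(−q⁵+q⁶Q²)), and the middle coefficients c₂, c₁ as in Garoufalidis' formula. -/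
private theorem pushE {A : Type*} [Ring A] {E d d' : A} [Invertible d] [Invertible d']
    (h : E * d = d' * E) : E * ⅟d = ⅟d' * E := by
  calc E * ⅟d = ⅟d' * (d' * E) * ⅟d := by rw [← mul_assoc, invOf_mul_self, one_mul]
    _ = ⅟d' * (E * d) * ⅟d := by rw [h]
    _ = ⅟d' * E * (d * ⅟d) := by simp only [mul_assoc]
    _ = ⅟d' * E := by rw [mul_invOf_self, mul_one]

private def invertibleOfCentralMul {A : Type*} [Ring A] {q b : A} (hq : ∀ a : A, q * a = a * q)
    [Invertible q] [Invertible (q * b)] : Invertible b where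
  invOf := ⅟(q * b) * q
  invOf_mul_self := by rw [mul_assoc, invOf_mul_self]
  mul_invOf_self := by
    have hb : Commute b (q * b) := by
      show b * (q * b) = q * b * b
      rw [← mul_assoc, ← hq b]
    have h2 : b * ⅟(q * b) = ⅟(q * b) * b := hb.invOf_right.eq
    rw [← mul_assoc, h2, mul_assoc, ← hq b, invOf_mul_self]

set_option maxHeartbeats 4000000

/-- the third-order annihilating operator of the colored Jones
polynomial of the figure-eight knot (Garoufalidis' explicit operator) factors as
`(E−1)·α(q,E,Q)·(Q−1)` in the Ore algebra `ℚ(q,Q)[E;σ]`, where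
`α(q,E,Q) = (1/(1+qQ))[(qQ/(1−q³Q²))E² +
  (1/(1−q³Q²) + 1/(1−qQ²) + qQ − 1 − 1/(qQ))E + qQ/(1−qQ²)]`.
We model the Ore algebra by a (noncommutative) ring containing central `q`,
an element `Q` and a skew variable `E` with `E·Q = q·Q·E`, all the relevant
denominators being invertible. -/
theorem figure_eight_annihilator_factorization {A : Type*} [Ring A] (q Q E : A)
    (hq : ∀ a : A, q * a = a * q) (hEQ : E * Q = q * Q * E)
    [iq : Invertible q] [iQ : Invertible Q]
    [i1 : Invertible (1 + q * Q)] [i2 : Invertible (1 - q ^ 3 * Q ^ 2)]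
    [i3 : Invertible (1 - q * Q ^ 2)]
    [i4 : Invertible (q + q ^ 3 * Q)] [i5 : Invertible (q - q ^ 6 * Q ^ 2)]
    [i6 : Invertible (q ^ 2 + q ^ 3 * Q)] [i7 : Invertible (-q + q ^ 6 * Q ^ 2)]
    [i8 : Invertible (q ^ 5 - q ^ 6 * Q ^ 2)] [i9 : Invertible (-q ^ 5 + q ^ 6 * Q ^ 2)] :
    q ^ 4 * Q * (-1 + q ^ 3 * Q) * (⅟(q + q ^ 3 * Q) * ⅟(q - q ^ 6 * Q ^ 2)) * E ^ 3 +
      (-q + q ^ 3 * Q) *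
        (q ^ 4 + q ^ 5 * Q - 2 * q ^ 6 * Q - q ^ 7 * Q ^ 2 + q ^ 8 * Q ^ 2 -
          q ^ 9 * Q ^ 2 - 2 * q ^ 10 * Q ^ 3 + q ^ 11 * Q ^ 3 + q ^ 12 * Q ^ 4) *
        ((⅟q) ^ 4 * ⅟Q * ⅟(q ^ 2 + q ^ 3 * Q) * ⅟(-q + q ^ 6 * Q ^ 2)) * E ^ 2 -
      (q ^ 2 - q ^ 3 * Q) *
        (q ^ 8 - 2 * q ^ 9 * Q + q ^ 10 * Q - q ^ 9 * Q ^ 2 + q ^ 10 * Q ^ 2 -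
          q ^ 11 * Q ^ 2 + q ^ 10 * Q ^ 3 - 2 * q ^ 11 * Q ^ 3 + q ^ 12 * Q ^ 4) *
        ((⅟q) ^ 5 * ⅟Q * ⅟(q + q ^ 3 * Q) * ⅟(q ^ 5 - q ^ 6 * Q ^ 2)) * E +
      q ^ 5 * Q * (-q ^ 3 + q ^ 3 * Q) *
        (⅟(q ^ 2 + q ^ 3 * Q) * ⅟(-q ^ 5 + q ^ 6 * Q ^ 2)) =
    (E - 1) *
      (⅟(1 + q * Q) *
        (q * Q * ⅟(1 - q ^ 3 * Q ^ 2) * E ^ 2 +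
          (⅟(1 - q ^ 3 * Q ^ 2) + ⅟(1 - q * Q ^ 2) + q * Q - 1 - ⅟q * ⅟Q) * E +
          q * Q * ⅟(1 - q * Q ^ 2))) *
      (Q - 1) := by
  -- q is central, hence so is its inverse
  have cq : ∀ a : A, Commute q a := fun a => hq a
  have hqc : ∀ a : A, ⅟q * a = a * ⅟q := fun a => ((cq a).invOf_left).eq
  have hEq : E * q = q * E := (hq E).symm
  -- new invertible denominators
  have hA2 : q * (1 + q ^ 2 * Q) = q + q ^ 3 * Q := by noncomm_ring
  have hB3 : q * (1 - q ^ 5 * Q ^ 2) = q - q ^ 6 * Q ^ 2 := by noncomm_ring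
  haveI : Invertible (q * (1 + q ^ 2 * Q)) := i4.copy _ hA2
  haveI iA2 : Invertible (1 + q ^ 2 * Q) := invertibleOfCentralMul hq
  haveI : Invertible (q * (1 - q ^ 5 * Q ^ 2)) := i5.copy _ hB3
  haveI iB3 : Invertible (1 - q ^ 5 * Q ^ 2) := invertibleOfCentralMul hq
  haveI iqQ : Invertible (q * Q) := invertibleMul q Q
  -- decompositions of the invOf's appearing in the statement
  have hq5 : q ^ 5 * (⅟q) ^ 5 = 1 := by
    rw [← (commute_invOf q).mul_pow, mul_invOf_self, one_pow]
  have d4 : ⅟(q + q ^ 3 * Q) = ⅟(1 + q ^ 2 * Q) * ⅟q := by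
    apply invOf_eq_right_inv
    rw [← hA2]
    simp only [mul_assoc, mul_invOf_cancel_left, mul_invOf_self]
  have d5 : ⅟(q - q ^ 6 * Q ^ 2) = ⅟(1 - q ^ 5 * Q ^ 2) * ⅟q := by
    apply invOf_eq_right_inv
    rw [← hB3]
    simp only [mul_assoc, mul_invOf_cancel_left, mul_invOf_self]
  have d6 : ⅟(q ^ 2 + q ^ 3 * Q) = ⅟(1 + q * Q) * (⅟q * ⅟q) := by
    apply invOf_eq_right_inv
    have h : q * (q * (1 + q * Q)) = q ^ 2 + q ^ 3 * Q := by noncomm_ring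
    rw [← h]
    simp only [mul_assoc, mul_invOf_cancel_left, mul_invOf_self]
  have d7 : ⅟(-q + q ^ 6 * Q ^ 2) = -(⅟(1 - q ^ 5 * Q ^ 2) * ⅟q) := by
    apply invOf_eq_right_inv
    have h : -q + q ^ 6 * Q ^ 2 = -(q * (1 - q ^ 5 * Q ^ 2)) := by noncomm_ring
    rw [h, neg_mul_neg]
    simp only [mul_assoc, mul_invOf_cancel_left, mul_invOf_self]
  have d8 : ⅟(q ^ 5 - q ^ 6 * Q ^ 2) = ⅟(1 - q * Q ^ 2) * (⅟q) ^ 5 := by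
    apply invOf_eq_right_inv
    have h : q ^ 5 * (1 - q * Q ^ 2) = q ^ 5 - q ^ 6 * Q ^ 2 := by noncomm_ring
    rw [← h]
    simp only [mul_assoc, mul_invOf_cancel_left]
    exact hq5
  have d9 : ⅟(-q ^ 5 + q ^ 6 * Q ^ 2) = -(⅟(1 - q * Q ^ 2) * (⅟q) ^ 5) := by
    apply invOf_eq_right_inv
    have h : -q ^ 5 + q ^ 6 * Q ^ 2 = -(q ^ 5 * (1 - q * Q ^ 2)) := by noncomm_ring
    rw [h, neg_mul_neg]
    simp only [mul_assoc, mul_invOf_cancel_left]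
    exact hq5
  -- commutation of E with the denominators
  have hEQ2 : E * Q ^ 2 = q ^ 2 * Q ^ 2 * E := by
    calc E * Q ^ 2 = (E * Q) * Q := by noncomm_ring
      _ = (q * Q * E) * Q := by rw [hEQ]
      _ = q * Q * (E * Q) := by noncomm_ring
      _ = q * Q * (q * Q * E) := by rw [hEQ]
      _ = q * (Q * q) * Q * E := by noncomm_ring
      _ = q * (q * Q) * Q * E := by rw [← hq Q]
      _ = q ^ 2 * Q ^ 2 * E := by noncomm_ring
  have hA1p : E * (1 + q * Q) = (1 + q ^ 2 * Q) * E := by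
    calc E * (1 + q * Q) = E + (E * q) * Q := by noncomm_ring
      _ = E + (q * E) * Q := by rw [hEq]
      _ = E + q * (E * Q) := by noncomm_ring
      _ = E + q * (q * Q * E) := by rw [hEQ]
      _ = (1 + q ^ 2 * Q) * E := by noncomm_ring
  have hB1p : E * (1 - q * Q ^ 2) = (1 - q ^ 3 * Q ^ 2) * E := by
    calc E * (1 - q * Q ^ 2) = E - (E * q) * Q ^ 2 := by noncomm_ring
      _ = E - (q * E) * Q ^ 2 := by rw [hEq]
      _ = E - q * (E * Q ^ 2) := by noncomm_ring
      _ = E - q * (q ^ 2 * Q ^ 2 * E) := by rw [hEQ2]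
      _ = (1 - q ^ 3 * Q ^ 2) * E := by noncomm_ring
  have hEq3 : E * q ^ 3 = q ^ 3 * E := ((cq E).pow_left 3).eq.symm
  have hB2p : E * (1 - q ^ 3 * Q ^ 2) = (1 - q ^ 5 * Q ^ 2) * E := by
    calc E * (1 - q ^ 3 * Q ^ 2) = E - (E * q ^ 3) * Q ^ 2 := by noncomm_ring
      _ = E - (q ^ 3 * E) * Q ^ 2 := by rw [hEq3]
      _ = E - q ^ 3 * (E * Q ^ 2) := by noncomm_ring
      _ = E - q ^ 3 * (q ^ 2 * Q ^ 2 * E) := by rw [hEQ2]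
      _ = (1 - q ^ 5 * Q ^ 2) * E := by noncomm_ring
  have eA1 : E * ⅟(1 + q * Q) = ⅟(1 + q ^ 2 * Q) * E := pushE hA1p
  have eB1 : E * ⅟(1 - q * Q ^ 2) = ⅟(1 - q ^ 3 * Q ^ 2) * E := pushE hB1p
  have eB2 : E * ⅟(1 - q ^ 3 * Q ^ 2) = ⅟(1 - q ^ 5 * Q ^ 2) * E := pushE hB2p
  have eQ : E * ⅟Q = ⅟(q * Q) * E := pushE hEQ
  have eiqQ : E * (⅟q * ⅟Q) = (⅟q * (⅟Q * ⅟q)) * E := by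
    calc E * (⅟q * ⅟Q) = (E * ⅟q) * ⅟Q := by noncomm_ring
      _ = (⅟q * E) * ⅟Q := by rw [← hqc E]
      _ = ⅟q * (E * ⅟Q) := by noncomm_ring
      _ = ⅟q * (⅟(q * Q) * E) := by rw [eQ]
      _ = ⅟q * ((⅟Q * ⅟q) * E) := by rw [invOf_mul]
      _ = (⅟q * (⅟Q * ⅟q)) * E := by noncomm_ring
  -- the three coefficient shifts
  have p2 : E * (q * Q * ⅟(1 - q ^ 3 * Q ^ 2)) = (q ^ 2 * Q * ⅟(1 - q ^ 5 * Q ^ 2)) * E := by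
    calc E * (q * Q * ⅟(1 - q ^ 3 * Q ^ 2))
        = (E * q) * Q * ⅟(1 - q ^ 3 * Q ^ 2) := by noncomm_ring
      _ = (q * E) * Q * ⅟(1 - q ^ 3 * Q ^ 2) := by rw [hEq]
      _ = q * ((E * Q) * ⅟(1 - q ^ 3 * Q ^ 2)) := by noncomm_ring
      _ = q * ((q * Q * E) * ⅟(1 - q ^ 3 * Q ^ 2)) := by rw [hEQ]
      _ = q * (q * Q * (E * ⅟(1 - q ^ 3 * Q ^ 2))) := by noncomm_ring
      _ = q * (q * Q * (⅟(1 - q ^ 5 * Q ^ 2) * E)) := by rw [eB2]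
      _ = (q ^ 2 * Q * ⅟(1 - q ^ 5 * Q ^ 2)) * E := by noncomm_ring
  have p0 : E * (q * Q * ⅟(1 - q * Q ^ 2)) = (q ^ 2 * Q * ⅟(1 - q ^ 3 * Q ^ 2)) * E := by
    calc E * (q * Q * ⅟(1 - q * Q ^ 2))
        = (E * q) * Q * ⅟(1 - q * Q ^ 2) := by noncomm_ring
      _ = (q * E) * Q * ⅟(1 - q * Q ^ 2) := by rw [hEq]
      _ = q * ((E * Q) * ⅟(1 - q * Q ^ 2)) := by noncomm_ring
      _ = q * ((q * Q * E) * ⅟(1 - q * Q ^ 2)) := by rw [hEQ]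
      _ = q * (q * Q * (E * ⅟(1 - q * Q ^ 2))) := by noncomm_ring
      _ = q * (q * Q * (⅟(1 - q ^ 3 * Q ^ 2) * E)) := by rw [eB1]
      _ = (q ^ 2 * Q * ⅟(1 - q ^ 3 * Q ^ 2)) * E := by noncomm_ring
  have p1 : E * (⅟(1 - q ^ 3 * Q ^ 2) + ⅟(1 - q * Q ^ 2) + q * Q - 1 - ⅟q * ⅟Q) =
      (⅟(1 - q ^ 5 * Q ^ 2) + ⅟(1 - q ^ 3 * Q ^ 2) + q ^ 2 * Q - 1 - ⅟q * (⅟Q * ⅟q)) * E := by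
    calc E * (⅟(1 - q ^ 3 * Q ^ 2) + ⅟(1 - q * Q ^ 2) + q * Q - 1 - ⅟q * ⅟Q)
        = E * ⅟(1 - q ^ 3 * Q ^ 2) + E * ⅟(1 - q * Q ^ 2) + (E * q) * Q - E -
            E * (⅟q * ⅟Q) := by noncomm_ring
      _ = ⅟(1 - q ^ 5 * Q ^ 2) * E + ⅟(1 - q ^ 3 * Q ^ 2) * E + (q * E) * Q - E -
            (⅟q * (⅟Q * ⅟q)) * E := by rw [eB2, eB1, hEq, eiqQ]
      _ = ⅟(1 - q ^ 5 * Q ^ 2) * E + ⅟(1 - q ^ 3 * Q ^ 2) * E + q * (E * Q) - E -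
            (⅟q * (⅟Q * ⅟q)) * E := by noncomm_ring
      _ = ⅟(1 - q ^ 5 * Q ^ 2) * E + ⅟(1 - q ^ 3 * Q ^ 2) * E + q * (q * Q * E) - E -
            (⅟q * (⅟Q * ⅟q)) * E := by rw [hEQ]
      _ = (⅟(1 - q ^ 5 * Q ^ 2) + ⅟(1 - q ^ 3 * Q ^ 2) + q ^ 2 * Q - 1 - ⅟q * (⅟Q * ⅟q)) * E := by
          noncomm_ring
  -- E^k commutation with (Q - 1)
  have hQ1 : E * (Q - 1) = (q * Q - 1) * E := by
    calc E * (Q - 1) = E * Q - E := by noncomm_ring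
      _ = q * Q * E - E := by rw [hEQ]
      _ = (q * Q - 1) * E := by noncomm_ring
  have hE2Q : E ^ 2 * Q = q ^ 2 * Q * E ^ 2 := by
    calc E ^ 2 * Q = E * (E * Q) := by noncomm_ring
      _ = E * (q * Q * E) := by rw [hEQ]
      _ = ((E * q) * Q) * E := by noncomm_ring
      _ = ((q * E) * Q) * E := by rw [hEq]
      _ = (q * (E * Q)) * E := by noncomm_ring
      _ = (q * (q * Q * E)) * E := by rw [hEQ]
      _ = q ^ 2 * Q * E ^ 2 := by noncomm_ring
  have hQ2 : E ^ 2 * (Q - 1) = (q ^ 2 * Q - 1) * E ^ 2 := by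
    calc E ^ 2 * (Q - 1) = E ^ 2 * Q - E ^ 2 := by noncomm_ring
      _ = q ^ 2 * Q * E ^ 2 - E ^ 2 := by rw [hE2Q]
      _ = (q ^ 2 * Q - 1) * E ^ 2 := by noncomm_ring
  have hEq2 : E * q ^ 2 = q ^ 2 * E := ((cq E).pow_left 2).eq.symm
  have hQ3 : E ^ 3 * (Q - 1) = (q ^ 3 * Q - 1) * E ^ 3 := by
    have hE3Q : E ^ 3 * Q = q ^ 3 * Q * E ^ 3 := by
      calc E ^ 3 * Q = E * (E ^ 2 * Q) := by noncomm_ring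
        _ = E * (q ^ 2 * Q * E ^ 2) := by rw [hE2Q]
        _ = ((E * q ^ 2) * Q) * E ^ 2 := by noncomm_ring
        _ = ((q ^ 2 * E) * Q) * E ^ 2 := by rw [hEq2]
        _ = (q ^ 2 * (E * Q)) * E ^ 2 := by noncomm_ring
        _ = (q ^ 2 * (q * Q * E)) * E ^ 2 := by rw [hEQ]
        _ = q ^ 3 * Q * E ^ 3 := by noncomm_ring
    calc E ^ 3 * (Q - 1) = E ^ 3 * Q - E ^ 3 := by noncomm_ring
      _ = q ^ 3 * Q * E ^ 3 - E ^ 3 := by rw [hE3Q]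
      _ = (q ^ 3 * Q - 1) * E ^ 3 := by noncomm_ring
  -- the key expansion of the right-hand side
  have key : (E - 1) *
      (⅟(1 + q * Q) *
        (q * Q * ⅟(1 - q ^ 3 * Q ^ 2) * E ^ 2 +
          (⅟(1 - q ^ 3 * Q ^ 2) + ⅟(1 - q * Q ^ 2) + q * Q - 1 - ⅟q * ⅟Q) * E +
          q * Q * ⅟(1 - q * Q ^ 2))) *
      (Q - 1) =
      ⅟(1 + q ^ 2 * Q) * (q ^ 2 * Q * ⅟(1 - q ^ 5 * Q ^ 2)) * (q ^ 3 * Q - 1) * E ^ 3 +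
      (⅟(1 + q ^ 2 * Q) * ((⅟(1 - q ^ 5 * Q ^ 2) + ⅟(1 - q ^ 3 * Q ^ 2) + q ^ 2 * Q - 1 -
          ⅟q * (⅟Q * ⅟q)) * (q ^ 2 * Q - 1)) -
        ⅟(1 + q * Q) * (q * Q * ⅟(1 - q ^ 3 * Q ^ 2) * (q ^ 2 * Q - 1))) * E ^ 2 +
      (⅟(1 + q ^ 2 * Q) * (q ^ 2 * Q * ⅟(1 - q ^ 3 * Q ^ 2) * (q * Q - 1)) -
        ⅟(1 + q * Q) * ((⅟(1 - q ^ 3 * Q ^ 2) + ⅟(1 - q * Q ^ 2) + q * Q - 1 - ⅟q * ⅟Q) *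
          (q * Q - 1))) * E +
      -(⅟(1 + q * Q) * (q * Q * ⅟(1 - q * Q ^ 2) * (Q - 1))) := by
    have hEM : E * (q * Q * ⅟(1 - q ^ 3 * Q ^ 2) * E ^ 2 +
        (⅟(1 - q ^ 3 * Q ^ 2) + ⅟(1 - q * Q ^ 2) + q * Q - 1 - ⅟q * ⅟Q) * E +
        q * Q * ⅟(1 - q * Q ^ 2)) =
        (q ^ 2 * Q * ⅟(1 - q ^ 5 * Q ^ 2)) * E ^ 3 +
        (⅟(1 - q ^ 5 * Q ^ 2) + ⅟(1 - q ^ 3 * Q ^ 2) + q ^ 2 * Q - 1 - ⅟q * (⅟Q * ⅟q)) * E ^ 2 +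
        (q ^ 2 * Q * ⅟(1 - q ^ 3 * Q ^ 2)) * E := by
      calc E * (q * Q * ⅟(1 - q ^ 3 * Q ^ 2) * E ^ 2 +
          (⅟(1 - q ^ 3 * Q ^ 2) + ⅟(1 - q * Q ^ 2) + q * Q - 1 - ⅟q * ⅟Q) * E +
          q * Q * ⅟(1 - q * Q ^ 2))
          = (E * (q * Q * ⅟(1 - q ^ 3 * Q ^ 2))) * E ^ 2 +
            (E * (⅟(1 - q ^ 3 * Q ^ 2) + ⅟(1 - q * Q ^ 2) + q * Q - 1 - ⅟q * ⅟Q)) * E +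
            E * (q * Q * ⅟(1 - q * Q ^ 2)) := by noncomm_ring
        _ = ((q ^ 2 * Q * ⅟(1 - q ^ 5 * Q ^ 2)) * E) * E ^ 2 +
            ((⅟(1 - q ^ 5 * Q ^ 2) + ⅟(1 - q ^ 3 * Q ^ 2) + q ^ 2 * Q - 1 -
              ⅟q * (⅟Q * ⅟q)) * E) * E +
            (q ^ 2 * Q * ⅟(1 - q ^ 3 * Q ^ 2)) * E := by rw [p2, p1, p0]
        _ = (q ^ 2 * Q * ⅟(1 - q ^ 5 * Q ^ 2)) * E ^ 3 +
            (⅟(1 - q ^ 5 * Q ^ 2) + ⅟(1 - q ^ 3 * Q ^ 2) + q ^ 2 * Q - 1 -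
              ⅟q * (⅟Q * ⅟q)) * E ^ 2 +
            (q ^ 2 * Q * ⅟(1 - q ^ 3 * Q ^ 2)) * E := by noncomm_ring
    calc (E - 1) *
        (⅟(1 + q * Q) *
          (q * Q * ⅟(1 - q ^ 3 * Q ^ 2) * E ^ 2 +
            (⅟(1 - q ^ 3 * Q ^ 2) + ⅟(1 - q * Q ^ 2) + q * Q - 1 - ⅟q * ⅟Q) * E +
            q * Q * ⅟(1 - q * Q ^ 2))) *
        (Q - 1)
        = (E * ⅟(1 + q * Q)) *
            ((q * Q * ⅟(1 - q ^ 3 * Q ^ 2) * E ^ 2 +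
              (⅟(1 - q ^ 3 * Q ^ 2) + ⅟(1 - q * Q ^ 2) + q * Q - 1 - ⅟q * ⅟Q) * E +
              q * Q * ⅟(1 - q * Q ^ 2)) * (Q - 1)) -
          ⅟(1 + q * Q) *
            ((q * Q * ⅟(1 - q ^ 3 * Q ^ 2) * E ^ 2 +
              (⅟(1 - q ^ 3 * Q ^ 2) + ⅟(1 - q * Q ^ 2) + q * Q - 1 - ⅟q * ⅟Q) * E +
              q * Q * ⅟(1 - q * Q ^ 2)) * (Q - 1)) := by noncomm_ring
      _ = (⅟(1 + q ^ 2 * Q) * E) *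
            ((q * Q * ⅟(1 - q ^ 3 * Q ^ 2) * E ^ 2 +
              (⅟(1 - q ^ 3 * Q ^ 2) + ⅟(1 - q * Q ^ 2) + q * Q - 1 - ⅟q * ⅟Q) * E +
              q * Q * ⅟(1 - q * Q ^ 2)) * (Q - 1)) -
          ⅟(1 + q * Q) *
            ((q * Q * ⅟(1 - q ^ 3 * Q ^ 2) * E ^ 2 +
              (⅟(1 - q ^ 3 * Q ^ 2) + ⅟(1 - q * Q ^ 2) + q * Q - 1 - ⅟q * ⅟Q) * E +
              q * Q * ⅟(1 - q * Q ^ 2)) * (Q - 1)) := by rw [eA1]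
      _ = ⅟(1 + q ^ 2 * Q) *
            ((E * (q * Q * ⅟(1 - q ^ 3 * Q ^ 2) * E ^ 2 +
              (⅟(1 - q ^ 3 * Q ^ 2) + ⅟(1 - q * Q ^ 2) + q * Q - 1 - ⅟q * ⅟Q) * E +
              q * Q * ⅟(1 - q * Q ^ 2))) * (Q - 1)) -
          ⅟(1 + q * Q) *
            (q * Q * ⅟(1 - q ^ 3 * Q ^ 2) * (E ^ 2 * (Q - 1)) +
             (⅟(1 - q ^ 3 * Q ^ 2) + ⅟(1 - q * Q ^ 2) + q * Q - 1 - ⅟q * ⅟Q) * (E * (Q - 1)) +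
             q * Q * ⅟(1 - q * Q ^ 2) * (Q - 1)) := by noncomm_ring
      _ = ⅟(1 + q ^ 2 * Q) *
            (((q ^ 2 * Q * ⅟(1 - q ^ 5 * Q ^ 2)) * E ^ 3 +
              (⅟(1 - q ^ 5 * Q ^ 2) + ⅟(1 - q ^ 3 * Q ^ 2) + q ^ 2 * Q - 1 -
                ⅟q * (⅟Q * ⅟q)) * E ^ 2 +
              (q ^ 2 * Q * ⅟(1 - q ^ 3 * Q ^ 2)) * E) * (Q - 1)) -
          ⅟(1 + q * Q) *
            (q * Q * ⅟(1 - q ^ 3 * Q ^ 2) * ((q ^ 2 * Q - 1) * E ^ 2) +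
             (⅟(1 - q ^ 3 * Q ^ 2) + ⅟(1 - q * Q ^ 2) + q * Q - 1 - ⅟q * ⅟Q) *
               ((q * Q - 1) * E) +
             q * Q * ⅟(1 - q * Q ^ 2) * (Q - 1)) := by rw [hEM, hQ2, hQ1]
      _ = ⅟(1 + q ^ 2 * Q) *
            ((q ^ 2 * Q * ⅟(1 - q ^ 5 * Q ^ 2)) * (E ^ 3 * (Q - 1)) +
             (⅟(1 - q ^ 5 * Q ^ 2) + ⅟(1 - q ^ 3 * Q ^ 2) + q ^ 2 * Q - 1 -
               ⅟q * (⅟Q * ⅟q)) * (E ^ 2 * (Q - 1)) +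
             (q ^ 2 * Q * ⅟(1 - q ^ 3 * Q ^ 2)) * (E * (Q - 1))) -
          ⅟(1 + q * Q) *
            (q * Q * ⅟(1 - q ^ 3 * Q ^ 2) * ((q ^ 2 * Q - 1) * E ^ 2) +
             (⅟(1 - q ^ 3 * Q ^ 2) + ⅟(1 - q * Q ^ 2) + q * Q - 1 - ⅟q * ⅟Q) *
               ((q * Q - 1) * E) +
             q * Q * ⅟(1 - q * Q ^ 2) * (Q - 1)) := by noncomm_ring
      _ = ⅟(1 + q ^ 2 * Q) *
            ((q ^ 2 * Q * ⅟(1 - q ^ 5 * Q ^ 2)) * ((q ^ 3 * Q - 1) * E ^ 3) +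
             (⅟(1 - q ^ 5 * Q ^ 2) + ⅟(1 - q ^ 3 * Q ^ 2) + q ^ 2 * Q - 1 -
               ⅟q * (⅟Q * ⅟q)) * ((q ^ 2 * Q - 1) * E ^ 2) +
             (q ^ 2 * Q * ⅟(1 - q ^ 3 * Q ^ 2)) * ((q * Q - 1) * E)) -
          ⅟(1 + q * Q) *
            (q * Q * ⅟(1 - q ^ 3 * Q ^ 2) * ((q ^ 2 * Q - 1) * E ^ 2) +
             (⅟(1 - q ^ 3 * Q ^ 2) + ⅟(1 - q * Q ^ 2) + q * Q - 1 - ⅟q * ⅟Q) *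
               ((q * Q - 1) * E) +
             q * Q * ⅟(1 - q * Q ^ 2) * (Q - 1)) := by rw [hQ3, hQ2, hQ1]
      _ = ⅟(1 + q ^ 2 * Q) * (q ^ 2 * Q * ⅟(1 - q ^ 5 * Q ^ 2)) * (q ^ 3 * Q - 1) * E ^ 3 +
          (⅟(1 + q ^ 2 * Q) * ((⅟(1 - q ^ 5 * Q ^ 2) + ⅟(1 - q ^ 3 * Q ^ 2) + q ^ 2 * Q - 1 -
              ⅟q * (⅟Q * ⅟q)) * (q ^ 2 * Q - 1)) -
            ⅟(1 + q * Q) * (q * Q * ⅟(1 - q ^ 3 * Q ^ 2) * (q ^ 2 * Q - 1))) * E ^ 2 +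
          (⅟(1 + q ^ 2 * Q) * (q ^ 2 * Q * ⅟(1 - q ^ 3 * Q ^ 2) * (q * Q - 1)) -
            ⅟(1 + q * Q) * ((⅟(1 - q ^ 3 * Q ^ 2) + ⅟(1 - q * Q ^ 2) + q * Q - 1 - ⅟q * ⅟Q) *
              (q * Q - 1))) * E +
          -(⅟(1 + q * Q) * (q * Q * ⅟(1 - q * Q ^ 2) * (Q - 1))) := by noncomm_ring
  -- the commutative subring generated by q, Q and the inverses
  let C : Subring A := Subring.centralizer {Q}
  let R : Subring A := Subring.centralizer (C : Set A)
  have hRC : R ≤ C := Subring.centralizer_le _ _ (by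
    intro x hx; rcases hx with rfl
    exact Subring.mem_centralizer_iff.2 (fun g hg => by rcases hg with rfl; rfl))
  letI : CommRing R := { (inferInstance : Ring R) with
    mul_comm := fun x y => Subtype.ext ((Subring.mem_centralizer_iff.1 y.2) x.1 (hRC x.2)) }
  have memR : ∀ {a : A}, (∀ x : A, Q * x = x * Q → x * a = a * x) → a ∈ R := by
    intro a h
    exact Subring.mem_centralizer_iff.2 (fun g hg => h g (Subring.mem_centralizer_iff.1 hg Q rfl))
  have mq : q ∈ R := memR (fun x _ => ((cq x).symm).eq)
  have mQ : Q ∈ R := memR (fun x h => h.symm)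
  have mu : ⅟q ∈ R := memR (fun x _ => (((cq x).symm).invOf_right).eq)
  have mv : ⅟Q ∈ R := memR (fun x h => ((show Commute x Q from h.symm).invOf_right).eq)
  have ma1 : ⅟(1 + q * Q) ∈ R := memR (fun x h =>
    (((Commute.one_right x).add_right (((cq x).symm).mul_right
      (show Commute x Q from h.symm))).invOf_right).eq)
  have ma2 : ⅟(1 + q ^ 2 * Q) ∈ R := memR (fun x h =>
    (((Commute.one_right x).add_right ((((cq x).symm).pow_right 2).mul_right
      (show Commute x Q from h.symm))).invOf_right).eq)
  have mb1 : ⅟(1 - q * Q ^ 2) ∈ R := memR (fun x h =>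
    (((Commute.one_right x).sub_right (((cq x).symm).mul_right
      ((show Commute x Q from h.symm).pow_right 2))).invOf_right).eq)
  have mb2 : ⅟(1 - q ^ 3 * Q ^ 2) ∈ R := memR (fun x h =>
    (((Commute.one_right x).sub_right ((((cq x).symm).pow_right 3).mul_right
      ((show Commute x Q from h.symm).pow_right 2))).invOf_right).eq)
  have mb3 : ⅟(1 - q ^ 5 * Q ^ 2) ∈ R := memR (fun x h =>
    (((Commute.one_right x).sub_right ((((cq x).symm).pow_right 5).mul_right
      ((show Commute x Q from h.symm).pow_right 2))).invOf_right).eq)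
  let qR : R := ⟨q, mq⟩
  let QR : R := ⟨Q, mQ⟩
  let uR : R := ⟨⅟q, mu⟩
  let vR : R := ⟨⅟Q, mv⟩
  let a1R : R := ⟨⅟(1 + q * Q), ma1⟩
  let a2R : R := ⟨⅟(1 + q ^ 2 * Q), ma2⟩
  let b1R : R := ⟨⅟(1 - q * Q ^ 2), mb1⟩
  let b2R : R := ⟨⅟(1 - q ^ 3 * Q ^ 2), mb2⟩
  let b3R : R := ⟨⅟(1 - q ^ 5 * Q ^ 2), mb3⟩
  have hu : qR * uR = 1 := Subtype.ext (mul_invOf_self q)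
  have hv : QR * vR = 1 := Subtype.ext (mul_invOf_self Q)
  have ha1 : (1 + qR * QR) * a1R = 1 := Subtype.ext (mul_invOf_self (1 + q * Q))
  have ha2 : (1 + qR ^ 2 * QR) * a2R = 1 := Subtype.ext (mul_invOf_self (1 + q ^ 2 * Q))
  have hb1 : (1 - qR * QR ^ 2) * b1R = 1 := Subtype.ext (mul_invOf_self (1 - q * Q ^ 2))
  have hb2 : (1 - qR ^ 3 * QR ^ 2) * b2R = 1 := Subtype.ext (mul_invOf_self (1 - q ^ 3 * Q ^ 2))
  have hb3 : (1 - qR ^ 5 * QR ^ 2) * b3R = 1 := Subtype.ext (mul_invOf_self (1 - q ^ 5 * Q ^ 2))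
  have e3 : qR ^ 4 * QR * (-1 + qR ^ 3 * QR) * (a2R * uR * (b3R * uR)) = a2R * (qR ^ 2 * QR * b3R) * (qR ^ 3 * QR - 1) := by
    calc qR ^ 4 * QR * (-1 + qR ^ 3 * QR) * (a2R * uR * (b3R * uR))
        = (qR ^ 4 * QR * (-1 + qR ^ 3 * QR) * (a2R * uR * (b3R * uR))) * (1) := by ring
      _ = (qR ^ 5 * QR ^ 2 - qR ^ 2 * QR) * (a2R * b3R) * ((qR * uR) ^ 2) := by ring
      _ = a2R * (qR ^ 2 * QR * b3R) * (qR ^ 3 * QR - 1) := by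
          simp only [hu, hv, ha1, ha2, hb1, hb2, hb3]; ring
  have e2 : (-qR + qR ^ 3 * QR) * (qR ^ 4 + qR ^ 5 * QR - 2 * qR ^ 6 * QR - qR ^ 7 * QR ^ 2 + qR ^ 8 * QR ^ 2 - qR ^ 9 * QR ^ 2 - 2 * qR ^ 10 * QR ^ 3 + qR ^ 11 * QR ^ 3 + qR ^ 12 * QR ^ 4) * (uR ^ 4 * vR * (a1R * (uR * uR)) * -(b3R * uR)) = a2R * ((b3R + b2R + qR ^ 2 * QR - 1 - uR * (vR * uR)) * (qR ^ 2 * QR - 1)) - a1R * (qR * QR * b2R * (qR ^ 2 * QR - 1)) := by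
    calc (-qR + qR ^ 3 * QR) * (qR ^ 4 + qR ^ 5 * QR - 2 * qR ^ 6 * QR - qR ^ 7 * QR ^ 2 + qR ^ 8 * QR ^ 2 - qR ^ 9 * QR ^ 2 - 2 * qR ^ 10 * QR ^ 3 + qR ^ 11 * QR ^ 3 + qR ^ 12 * QR ^ 4) * (uR ^ 4 * vR * (a1R * (uR * uR)) * -(b3R * uR))
        = ((-qR + qR ^ 3 * QR) * (qR ^ 4 + qR ^ 5 * QR - 2 * qR ^ 6 * QR - qR ^ 7 * QR ^ 2 + qR ^ 8 * QR ^ 2 - qR ^ 9 * QR ^ 2 - 2 * qR ^ 10 * QR ^ 3 + qR ^ 11 * QR ^ 3 + qR ^ 12 * QR ^ 4) * (uR ^ 4 * vR * (a1R * (uR * uR)) * -(b3R * uR))) * (((1 + qR ^ 2 * QR) * a2R) * ((1 - qR ^ 3 * QR ^ 2) * b2R)) := by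
          simp only [hu, hv, ha1, ha2, hb1, hb2, hb3]; ring
      _ = (-qR ^ 2 * QR + 1) * (uR ^ 2 * vR * a2R) * ((qR * uR) ^ 5 * ((1 + qR * QR) * a1R) * ((1 - qR ^ 3 * QR ^ 2) * b2R) * ((1 - qR ^ 5 * QR ^ 2) * b3R)) + (-qR ^ 3 * QR ^ 2 + qR * QR) * (a1R * b2R) * ((qR * uR) ^ 7 * (QR * vR) * ((1 + qR ^ 2 * QR) * a2R) * ((1 - qR ^ 5 * QR ^ 2) * b3R)) + (qR ^ 2 * QR - 1) * (a2R * b2R) * ((qR * uR) ^ 7 * (QR * vR) * ((1 + qR * QR) * a1R) * ((1 - qR ^ 5 * QR ^ 2) * b3R)) + (qR ^ 2 * QR - 1) * (a2R * b3R) * ((qR * uR) ^ 7 * (QR * vR) * ((1 + qR * QR) * a1R) * ((1 - qR ^ 3 * QR ^ 2) * b2R)) + (qR ^ 4 * QR ^ 2 - 2 * qR ^ 2 * QR + 1) * (a2R) * ((qR * uR) ^ 7 * (QR * vR) * ((1 + qR * QR) * a1R) * ((1 - qR ^ 3 * QR ^ 2) * b2R) * ((1 - qR ^ 5 * QR ^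 2) * b3R)) := by ring
      _ = a2R * ((b3R + b2R + qR ^ 2 * QR - 1 - uR * (vR * uR)) * (qR ^ 2 * QR - 1)) - a1R * (qR * QR * b2R * (qR ^ 2 * QR - 1)) := by
          simp only [hu, hv, ha1, ha2, hb1, hb2, hb3]; ring
  have e1 : (qR ^ 2 - qR ^ 3 * QR) * (qR ^ 8 - 2 * qR ^ 9 * QR + qR ^ 10 * QR - qR ^ 9 * QR ^ 2 + qR ^ 10 * QR ^ 2 - qR ^ 11 * QR ^ 2 + qR ^ 10 * QR ^ 3 - 2 * qR ^ 11 * QR ^ 3 + qR ^ 12 * QR ^ 4) * (uR ^ 5 * vR * (a2R * uR) * (b1R * uR ^ 5)) = -(a2R * (qR ^ 2 * QR * b2R * (qR * QR - 1)) - a1R * ((b2R + b1R + qR * QR - 1 - uR * vR) * (qR * QR - 1))) := by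
    calc (qR ^ 2 - qR ^ 3 * QR) * (qR ^ 8 - 2 * qR ^ 9 * QR + qR ^ 10 * QR - qR ^ 9 * QR ^ 2 + qR ^ 10 * QR ^ 2 - qR ^ 11 * QR ^ 2 + qR ^ 10 * QR ^ 3 - 2 * qR ^ 11 * QR ^ 3 + qR ^ 12 * QR ^ 4) * (uR ^ 5 * vR * (a2R * uR) * (b1R * uR ^ 5))
        = ((qR ^ 2 - qR ^ 3 * QR) * (qR ^ 8 - 2 * qR ^ 9 * QR + qR ^ 10 * QR - qR ^ 9 * QR ^ 2 + qR ^ 10 * QR ^ 2 - qR ^ 11 * QR ^ 2 + qR ^ 10 * QR ^ 3 - 2 * qR ^ 11 * QR ^ 3 + qR ^ 12 * QR ^ 4) * (uR ^ 5 * vR * (a2R * uR) * (b1R * uR ^ 5))) * (((1 + qR * QR) * a1R) * ((1 - qR ^ 3 * QR ^ 2) * b2R)) := by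
          simp only [hu, hv, ha1, ha2, hb1, hb2, hb3]; ring
      _ = (-qR * QR + 1) * (uR * vR * a1R) * ((qR * uR) ^ 10 * ((1 + qR ^ 2 * QR) * a2R) * ((1 - qR * QR ^ 2) * b1R) * ((1 - qR ^ 3 * QR ^ 2) * b2R)) + (qR * QR - 1) * (a1R * b1R) * ((qR * uR) ^ 11 * (QR * vR) * ((1 + qR ^ 2 * QR) * a2R) * ((1 - qR ^ 3 * QR ^ 2) * b2R)) + (qR * QR - 1) * (a1R * b2R) * ((qR * uR) ^ 11 * (QR * vR) * ((1 + qR ^ 2 * QR) * a2R) * ((1 - qR * QR ^ 2) * b1R)) + (qR ^ 2 * QR ^ 2 - 2 * qR * QR + 1) * (a1R) * ((qR * uR) ^ 11 * (QR * vR) * ((1 + qR ^ 2 * QR) * a2R) * ((1 - qR * QR ^ 2) * b1R) * ((1 - qR ^ 3 * QR ^ 2) * b2R)) + (-qR ^ 3 * QR ^ 2 + qR ^ 2 * QR) * (a2R * b2R) * ((qR * uR) ^ 11 * (QR * vR) * ((1 + qR * QR) * a1R) * ((1 - qR * QR ^ 2) * b1R)) := by ring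
      _ = -(a2R * (qR ^ 2 * QR * b2R * (qR * QR - 1)) - a1R * ((b2R + b1R + qR * QR - 1 - uR * vR) * (qR * QR - 1))) := by
          simp only [hu, hv, ha1, ha2, hb1, hb2, hb3]; ring
  have e0 : qR ^ 5 * QR * (-qR ^ 3 + qR ^ 3 * QR) * (a1R * (uR * uR) * -(b1R * uR ^ 5)) = -(a1R * (qR * QR * b1R * (QR - 1))) := by
    calc qR ^ 5 * QR * (-qR ^ 3 + qR ^ 3 * QR) * (a1R * (uR * uR) * -(b1R * uR ^ 5))
        = (qR ^ 5 * QR * (-qR ^ 3 + qR ^ 3 * QR) * (a1R * (uR * uR) * -(b1R * uR ^ 5))) * (1) := by ring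
      _ = (-qR * QR ^ 2 + qR * QR) * (a1R * b1R) * ((qR * uR) ^ 7) := by ring
      _ = -(a1R * (qR * QR * b1R * (QR - 1))) := by
          simp only [hu, hv, ha1, ha2, hb1, hb2, hb3]; ring
  -- transfer the four coefficient identities back to A
  have hC3 : q ^ 4 * Q * (-1 + q ^ 3 * Q) * (⅟(1 + q ^ 2 * Q) * ⅟q * (⅟(1 - q ^ 5 * Q ^ 2) * ⅟q)) =
      ⅟(1 + q ^ 2 * Q) * (q ^ 2 * Q * ⅟(1 - q ^ 5 * Q ^ 2)) * (q ^ 3 * Q - 1) :=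
    congrArg Subtype.val e3
  have hC2 : (-q + q ^ 3 * Q) *
      (q ^ 4 + q ^ 5 * Q - 2 * q ^ 6 * Q - q ^ 7 * Q ^ 2 + q ^ 8 * Q ^ 2 -
        q ^ 9 * Q ^ 2 - 2 * q ^ 10 * Q ^ 3 + q ^ 11 * Q ^ 3 + q ^ 12 * Q ^ 4) *
      ((⅟q) ^ 4 * ⅟Q * (⅟(1 + q * Q) * (⅟q * ⅟q)) * -(⅟(1 - q ^ 5 * Q ^ 2) * ⅟q)) =
      ⅟(1 + q ^ 2 * Q) * ((⅟(1 - q ^ 5 * Q ^ 2) + ⅟(1 - q ^ 3 * Q ^ 2) + q ^ 2 * Q - 1 -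
          ⅟q * (⅟Q * ⅟q)) * (q ^ 2 * Q - 1)) -
        ⅟(1 + q * Q) * (q * Q * ⅟(1 - q ^ 3 * Q ^ 2) * (q ^ 2 * Q - 1)) :=
    congrArg Subtype.val e2
  have hC1 : (q ^ 2 - q ^ 3 * Q) *
      (q ^ 8 - 2 * q ^ 9 * Q + q ^ 10 * Q - q ^ 9 * Q ^ 2 + q ^ 10 * Q ^ 2 -
        q ^ 11 * Q ^ 2 + q ^ 10 * Q ^ 3 - 2 * q ^ 11 * Q ^ 3 + q ^ 12 * Q ^ 4) *
      ((⅟q) ^ 5 * ⅟Q * (⅟(1 + q ^ 2 * Q) * ⅟q) * (⅟(1 - q * Q ^ 2) * (⅟q) ^ 5)) =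
      -(⅟(1 + q ^ 2 * Q) * (q ^ 2 * Q * ⅟(1 - q ^ 3 * Q ^ 2) * (q * Q - 1)) -
        ⅟(1 + q * Q) * ((⅟(1 - q ^ 3 * Q ^ 2) + ⅟(1 - q * Q ^ 2) + q * Q - 1 - ⅟q * ⅟Q) *
          (q * Q - 1))) :=
    congrArg Subtype.val e1
  have hC0 : q ^ 5 * Q * (-q ^ 3 + q ^ 3 * Q) *
      (⅟(1 + q * Q) * (⅟q * ⅟q) * -(⅟(1 - q * Q ^ 2) * (⅟q) ^ 5)) =
      -(⅟(1 + q * Q) * (q * Q * ⅟(1 - q * Q ^ 2) * (Q - 1))) :=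
    congrArg Subtype.val e0
  rw [d4, d5, d6, d7, d8, d9, key, hC3, hC2, hC1, hC0]
  noncomm_ring
end

section
/- Let F(n,i) be the figure-eight knot summand and G(n,i) = R(E,Q)F where R(E,Q) = [ (qQ/(1−q³Q²))E² + (1/(1−q³Q²) + 1/(1−qQ²) − 1)E + qQ/(1−qQ²) ](Q−1) acting with Q = qⁿ. Then the telescoping sum Σ_{i=0}^{n+1} (G(n,i+1) − G(n,i)) = G(n,n+2) − G(n,0) equals q^{n+1} + 1. -/
/-- The quantum integer `{k} = v^k - v^{-k}` where `v = q^{1/2}`. -/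
noncomputable def qint {K : Type*} [Field K] (v : K) (k : ℤ) : K := v ^ k - v ^ (-k)

/-- The quantum factorial `{n}! = {1}{2}⋯{n}`. -/
noncomputable def qfac {K : Type*} [Field K] (v : K) (n : ℕ) : K :=
  ∏ j ∈ Finset.range n, qint v ((j : ℤ) + 1)

/-- The figure-eight knot summand `F(n,i) = (1/{n}) · {n+i}!/{n-i-1}!`,
extended by `0` for `i ≥ n`. -/
noncomputable def F41 {K : Type*} [Field K] (v : K) (n i : ℕ) : K :=
  if i < n then qfac v (n + i) / (qint v (n : ℤ) * qfac v (n - i - 1)) else 0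

/-- `G(n,i) = (R(E,Q)F)(n,i)` where
`R(E,Q) = [(qQ/(1−q³Q²))E² + (1/(1−q³Q²) + 1/(1−qQ²) − 1)E + qQ/(1−qQ²)](Q−1)`,
acting with `(QF)(n,i) = qⁿ F(n,i)` and `(EF)(n,i) = F(n+1,i)`, `q = v²`. -/
noncomputable def G41 {K : Type*} [Field K] (v : K) (n i : ℕ) : K :=
  let q := v ^ 2
  q * q ^ n / (1 - q ^ 3 * (q ^ n) ^ 2) * ((q ^ (n + 2) - 1) * F41 v (n + 2) i) +
    (1 / (1 - q ^ 3 * (q ^ n) ^ 2) + 1 / (1 - q * (q ^ n) ^ 2) - 1) *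
      ((q ^ (n + 1) - 1) * F41 v (n + 1) i) +
    q * q ^ n / (1 - q * (q ^ n) ^ 2) * ((q ^ n - 1) * F41 v n i)

lemma qfac_ne_zero {K : Type*} [Field K] (v : K)
    (hqint : ∀ k : ℕ, 1 ≤ k → qint v (k : ℤ) ≠ 0) (n : ℕ) : qfac v n ≠ 0 := by
  apply Finset.prod_ne_zero_iff.2
  intro j _
  have := hqint (j + 1) (Nat.le_add_left 1 j)
  simpa using this

lemma F41_at_zero {K : Type*} [Field K] (v : K)
    (hqint : ∀ k : ℕ, 1 ≤ k → qint v (k : ℤ) ≠ 0) (n : ℕ) (hn : 1 ≤ n) :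
    F41 v n 0 = 1 := by
  rw [F41, if_pos (show 0 < n from hn)]
  obtain ⟨m, rfl⟩ := Nat.exists_eq_add_of_le hn
  have h1 : qfac v (1 + m + 0) = qfac v m * qint v ((1 + m : ℕ) : ℤ) := by
    rw [show 1 + m + 0 = m + 1 from by omega, qfac, Finset.prod_range_succ, ← qfac]
    congr 2
    push_cast; ring
  have h2 : 1 + m - 0 - 1 = m := by omega
  rw [h1, h2]
  have ha := hqint (1 + m) (by omega)
  have hb := qfac_ne_zero v hqint m
  push_cast at ha
  field_simp
  exact div_self (by push_cast; exact ha)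

/-- the telescoping sum `∑_{i=0}^{n+1} (G(n,i+1) − G(n,i))`
equals `G(n,n+2) − G(n,0)`, which equals `q^{n+1} + 1`. -/
theorem figure_eight_telescoping_sum {K : Type*} [Field K] (v q : K)
    (hv : v ≠ 0) (hq : q = v ^ 2) (n : ℕ)
    (hqint : ∀ k : ℕ, 1 ≤ k → qint v (k : ℤ) ≠ 0)
    (hd1 : 1 - q ^ 3 * (q ^ n) ^ 2 ≠ 0) (hd2 : 1 - q * (q ^ n) ^ 2 ≠ 0) :
    (∑ i ∈ Finset.range (n + 2), (G41 v n (i + 1) - G41 v n i)) =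
        G41 v n (n + 2) - G41 v n 0 ∧
      G41 v n (n + 2) - G41 v n 0 = q ^ (n + 1) + 1 := by
  have hz : G41 v n (n + 2) = 0 := by
    simp [G41, F41, show ¬ (n+2 < n+2) from by omega,
      show ¬ (n+2 < n+1) from by omega, show ¬ (n+2 < n) from by omega]
  have h2 : F41 v (n+2) 0 = 1 := F41_at_zero v hqint _ (by omega)
  have h1 : F41 v (n+1) 0 = 1 := F41_at_zero v hqint _ (by omega)
  have key : G41 v n (n + 2) - G41 v n 0 = q ^ (n + 1) + 1 := by
    rw [hz]
    subst hq
    rcases Nat.eq_zero_or_pos n with rfl | hn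
    · simp only [G41, h1, h2]
      norm_num at hd1 hd2 ⊢
      have hd1' : (1:K) - v ^ 6 ≠ 0 := by convert hd1 using 2; ring
      field_simp
      ring
    · have h0 : F41 v n 0 = 1 := F41_at_zero v hqint _ hn
      simp only [G41, h0, h1, h2]
      have hd1' : (1:K) - v ^ 6 * ((v ^ 2) ^ n) ^ 2 ≠ 0 := by convert hd1 using 2; ring
      field_simp
      ring
  exact ⟨Finset.sum_range_sub (f := G41 v n) (n + 2), key⟩
end

section
/- In the Ore algebra ℚ(q)[Q^{±1}, Q₁^{±1}][E, Ẽ₁] with relations EQ = qQE, Ẽ₁Q₁ = qQ₁Ẽ₁, EQ₁ = Q₁E, Ẽ₁Q = QẼ₁, EẼ₁ = Ẽ₁E: the left ideal generated by (E+qQ)Q₁(Q−1) − (1+QE)(Q−1) and q²Q₁²Q + qQ₁(−Q² + QẼ₁ − 1) + Q contains the Q₁-free element P(E,Q,Ẽ₁) = [ (qQ/(1−q³Q²))Ẽ₁E² + (Ẽ₁/(1−q³Q²) + Ẽ₁/(1−qQ²) + qQ − Ẽ₁ − 1/(qQ))E + (qQ/(1−qQ²))Ẽ₁ ](Q−1).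 -/
set_option maxHeartbeats 4000000 in
/-- in the Ore algebra `ℚ(q)[Q^{±1},Q₁^{±1}][E,Ẽ₁]` with relations
`EQ = qQE`, `Ẽ₁Q₁ = qQ₁Ẽ₁`, `EQ₁ = Q₁E`, `Ẽ₁Q = QẼ₁`, `EẼ₁ = Ẽ₁E`, the left ideal
generated by `(E+qQ)Q₁(Q−1) − (1+QE)(Q−1)` and
`q²Q₁²Q + qQ₁(−Q² + QẼ₁ − 1) + Q` contains the `Q₁`-free element
`P(E,Q,Ẽ₁) = [(qQ/(1−q³Q²))Ẽ₁E² + (Ẽ₁/(1−q³Q²) + Ẽ₁/(1−qQ²) + qQ − Ẽ₁ − 1/(qQ))E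
  + (qQ/(1−qQ²))Ẽ₁](Q−1)`.
We model the Ore algebra by a (noncommutative) ring containing central `q`,
commuting elements `Q, Q₁` and shift operators `E, Ẽ₁` with the stated
relations, the relevant denominators being invertible. -/
theorem figure_eight_left_ideal_membership {A : Type*} [Ring A]
    (q Q Q₁ E E₁ : A)
    (hq : ∀ a : A, q * a = a * q)
    (hQQ₁ : Q * Q₁ = Q₁ * Q)
    (hEQ : E * Q = q * Q * E) (hE₁Q₁ : E₁ * Q₁ = q * Q₁ * E₁)
    (hEQ₁ : E * Q₁ = Q₁ * E) (hE₁Q : E₁ * Q = Q * E₁)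
    (hEE₁ : E * E₁ = E₁ * E)
    [iq : Invertible q] [iQ : Invertible Q] [iQ₁ : Invertible Q₁]
    [i2 : Invertible (1 - q ^ 3 * Q ^ 2)] [i3 : Invertible (1 - q * Q ^ 2)] :
    ∃ a b : A,
      (q * Q * ⅟(1 - q ^ 3 * Q ^ 2) * E₁ * E ^ 2 +
          (⅟(1 - q ^ 3 * Q ^ 2) * E₁ + ⅟(1 - q * Q ^ 2) * E₁ + q * Q - E₁ -
            ⅟q * ⅟Q) * E +
          q * Q * ⅟(1 - q * Q ^ 2) * E₁) * (Q - 1) =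
        a * ((E + q * Q) * Q₁ * (Q - 1) - (1 + Q * E) * (Q - 1)) +
          b * (q ^ 2 * Q₁ ^ 2 * Q + q * Q₁ * (-Q ^ 2 + Q * E₁ - 1) + Q) := by
  -- helper for swapping adjacent commuting factors inside a product
  have swap : ∀ x y : A, x * y = y * x → ∀ t : A, x * (y * t) = y * (x * t) := by
    intro x y h t
    rw [← mul_assoc, h, mul_assoc]
  -- q is central
  have cmq : ∀ x : A, Commute q x := hq
  -- basic commutation equations (oriented: smaller letter goes left)
  have cQq : Q * q = q * Q := (hq Q).symm
  have cQ1q : Q₁ * q = q * Q₁ := (hq Q₁).symm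
  have cEq : E * q = q * E := (hq E).symm
  have cE1q : E₁ * q = q * E₁ := (hq E₁).symm
  have cQ1Q : Q₁ * Q = Q * Q₁ := hQQ₁.symm
  have cE1E : E₁ * E = E * E₁ := hEE₁.symm
  have sQq : ∀ t, Q * (q * t) = q * (Q * t) := swap Q q cQq
  have sQ1q : ∀ t, Q₁ * (q * t) = q * (Q₁ * t) := swap Q₁ q cQ1q
  have sEq : ∀ t, E * (q * t) = q * (E * t) := swap E q cEq
  have sE1q : ∀ t, E₁ * (q * t) = q * (E₁ * t) := swap E₁ q cE1q
  have sQ1Q : ∀ t, Q₁ * (Q * t) = Q * (Q₁ * t) := swap Q₁ Q cQ1Q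
  have sEQ1 : ∀ t, E * (Q₁ * t) = Q₁ * (E * t) := swap E Q₁ hEQ₁
  have sE1Q : ∀ t, E₁ * (Q * t) = Q * (E₁ * t) := swap E₁ Q hE₁Q
  have sE1E : ∀ t, E₁ * (E * t) = E * (E₁ * t) := swap E₁ E cE1E
  have cEQ : E * Q = q * (Q * E) := by rw [hEQ, mul_assoc]
  have sEQ : ∀ t, E * (Q * t) = q * (Q * (E * t)) := by
    intro t; rw [← mul_assoc, hEQ, mul_assoc, mul_assoc]
  have cE1Q1 : E₁ * Q₁ = q * (Q₁ * E₁) := by rw [hE₁Q₁, mul_assoc]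
  have sE1Q1 : ∀ t, E₁ * (Q₁ * t) = q * (Q₁ * (E₁ * t)) := by
    intro t; rw [← mul_assoc, hE₁Q₁, mul_assoc, mul_assoc]
  -- rules for the central ⅟q
  have ciq : ∀ x : A, Commute x (⅟q) := fun x => ((cmq x).symm).invOf_right
  have cQiq : Q * ⅟q = ⅟q * Q := (ciq Q).eq
  have cQ1iq : Q₁ * ⅟q = ⅟q * Q₁ := (ciq Q₁).eq
  have cEiq : E * ⅟q = ⅟q * E := (ciq E).eq
  have cE1iq : E₁ * ⅟q = ⅟q * E₁ := (ciq E₁).eq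
  have sQiq : ∀ t, Q * (⅟q * t) = ⅟q * (Q * t) := swap Q (⅟q) cQiq
  have sQ1iq : ∀ t, Q₁ * (⅟q * t) = ⅟q * (Q₁ * t) := swap Q₁ (⅟q) cQ1iq
  have sEiq : ∀ t, E * (⅟q * t) = ⅟q * (E * t) := swap E (⅟q) cEiq
  have sE1iq : ∀ t, E₁ * (⅟q * t) = ⅟q * (E₁ * t) := swap E₁ (⅟q) cE1iq
  -- commutation with the denominators
  have cmQq : Commute Q q := (cmq Q).symm
  have cmE1Q : Commute E₁ Q := hE₁Q
  have cmE1qc : Commute E₁ q := (cmq E₁).symm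
  have cmQd3 : Commute Q (1 - q * Q ^ 2) :=
    (Commute.one_right Q).sub_right (cmQq.mul_right ((Commute.refl Q).pow_right 2))
  have cmQd2 : Commute Q (1 - q ^ 3 * Q ^ 2) :=
    (Commute.one_right Q).sub_right ((cmQq.pow_right 3).mul_right
      ((Commute.refl Q).pow_right 2))
  have cmqd3 : Commute q (1 - q * Q ^ 2) := cmq _
  have cmqd2 : Commute q (1 - q ^ 3 * Q ^ 2) := cmq _
  have cmE1d3 : Commute E₁ (1 - q * Q ^ 2) :=
    (Commute.one_right E₁).sub_right (cmE1qc.mul_right (cmE1Q.pow_right 2))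
  have cmE1d2 : Commute E₁ (1 - q ^ 3 * Q ^ 2) :=
    (Commute.one_right E₁).sub_right ((cmE1qc.pow_right 3).mul_right (cmE1Q.pow_right 2))
  have cmd3d2 : Commute (1 - q * Q ^ 2) (1 - q ^ 3 * Q ^ 2) :=
    (Commute.one_left _).sub_left ((cmqd2.mul_left (cmQd2.pow_left 2)))
  -- dive rules for ⅟(1-q^3*Q^2)
  have i2q : ∀ t, ⅟(1 - q ^ 3 * Q ^ 2) * (q * t) = q * (⅟(1 - q ^ 3 * Q ^ 2) * t) :=
    swap _ q (cmqd2.invOf_right.symm.eq)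
  have i2q' : ⅟(1 - q ^ 3 * Q ^ 2) * q = q * ⅟(1 - q ^ 3 * Q ^ 2) := cmqd2.invOf_right.symm.eq
  have i2Q : ∀ t, ⅟(1 - q ^ 3 * Q ^ 2) * (Q * t) = Q * (⅟(1 - q ^ 3 * Q ^ 2) * t) :=
    swap _ Q (cmQd2.invOf_right.symm.eq)
  have i2Q' : ⅟(1 - q ^ 3 * Q ^ 2) * Q = Q * ⅟(1 - q ^ 3 * Q ^ 2) := cmQd2.invOf_right.symm.eq
  have i2E1 : ∀ t, ⅟(1 - q ^ 3 * Q ^ 2) * (E₁ * t) = E₁ * (⅟(1 - q ^ 3 * Q ^ 2) * t) :=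
    swap _ E₁ (cmE1d2.invOf_right.symm.eq)
  have i2E1' : ⅟(1 - q ^ 3 * Q ^ 2) * E₁ = E₁ * ⅟(1 - q ^ 3 * Q ^ 2) := cmE1d2.invOf_right.symm.eq
  have i2d3 : ∀ t, ⅟(1 - q ^ 3 * Q ^ 2) * ((1 - q * Q ^ 2) * t) =
      (1 - q * Q ^ 2) * (⅟(1 - q ^ 3 * Q ^ 2) * t) :=
    swap _ _ (cmd3d2.invOf_right.symm.eq)
  have i2d3' : ⅟(1 - q ^ 3 * Q ^ 2) * (1 - q * Q ^ 2) =
      (1 - q * Q ^ 2) * ⅟(1 - q ^ 3 * Q ^ 2) := cmd3d2.invOf_right.symm.eq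
  -- dive rules for ⅟(1-q*Q^2)
  have i3q : ∀ t, ⅟(1 - q * Q ^ 2) * (q * t) = q * (⅟(1 - q * Q ^ 2) * t) :=
    swap _ q (cmqd3.invOf_right.symm.eq)
  have i3q' : ⅟(1 - q * Q ^ 2) * q = q * ⅟(1 - q * Q ^ 2) := cmqd3.invOf_right.symm.eq
  have i3Q : ∀ t, ⅟(1 - q * Q ^ 2) * (Q * t) = Q * (⅟(1 - q * Q ^ 2) * t) :=
    swap _ Q (cmQd3.invOf_right.symm.eq)
  have i3Q' : ⅟(1 - q * Q ^ 2) * Q = Q * ⅟(1 - q * Q ^ 2) := cmQd3.invOf_right.symm.eq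
  have i3E1 : ∀ t, ⅟(1 - q * Q ^ 2) * (E₁ * t) = E₁ * (⅟(1 - q * Q ^ 2) * t) :=
    swap _ E₁ (cmE1d3.invOf_right.symm.eq)
  have i3E1' : ⅟(1 - q * Q ^ 2) * E₁ = E₁ * ⅟(1 - q * Q ^ 2) := cmE1d3.invOf_right.symm.eq
  have i3d2 : ∀ t, ⅟(1 - q * Q ^ 2) * ((1 - q ^ 3 * Q ^ 2) * t) =
      (1 - q ^ 3 * Q ^ 2) * (⅟(1 - q * Q ^ 2) * t) :=
    swap _ _ (cmd3d2.symm.invOf_right.symm.eq)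
  have i3d2' : ⅟(1 - q * Q ^ 2) * (1 - q ^ 3 * Q ^ 2) =
      (1 - q ^ 3 * Q ^ 2) * ⅟(1 - q * Q ^ 2) := cmd3d2.symm.invOf_right.symm.eq
  -- dive rules for ⅟Q
  have iQq : ∀ t, ⅟Q * (q * t) = q * (⅟Q * t) := swap _ q (cmQq.invOf_left.eq)
  have iQq' : ⅟Q * q = q * ⅟Q := cmQq.invOf_left.eq
  have iQd3 : ∀ t, ⅟Q * ((1 - q * Q ^ 2) * t) = (1 - q * Q ^ 2) * (⅟Q * t) :=
    swap _ _ (cmQd3.invOf_left.eq)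
  have iQd3' : ⅟Q * (1 - q * Q ^ 2) = (1 - q * Q ^ 2) * ⅟Q := cmQd3.invOf_left.eq
  have iQd2 : ∀ t, ⅟Q * ((1 - q ^ 3 * Q ^ 2) * t) = (1 - q ^ 3 * Q ^ 2) * (⅟Q * t) :=
    swap _ _ (cmQd2.invOf_left.eq)
  have iQd2' : ⅟Q * (1 - q ^ 3 * Q ^ 2) = (1 - q ^ 3 * Q ^ 2) * ⅟Q := cmQd2.invOf_left.eq
  have iQE1 : ∀ t, ⅟Q * (E₁ * t) = E₁ * (⅟Q * t) := swap _ E₁ (cmE1Q.symm.invOf_left.eq)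
  have iQE1' : ⅟Q * E₁ = E₁ * ⅟Q := cmE1Q.symm.invOf_left.eq
  -- dive rules for ⅟q
  have iqQ : ∀ t, ⅟q * (Q * t) = Q * (⅟q * t) := swap _ Q (cQiq.symm)
  have iqQ' : ⅟q * Q = Q * ⅟q := cQiq.symm
  have iqd3 : ∀ t, ⅟q * ((1 - q * Q ^ 2) * t) = (1 - q * Q ^ 2) * (⅟q * t) :=
    swap _ _ (cmqd3.invOf_left.eq)
  have iqd3' : ⅟q * (1 - q * Q ^ 2) = (1 - q * Q ^ 2) * ⅟q := cmqd3.invOf_left.eq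
  have iqd2 : ∀ t, ⅟q * ((1 - q ^ 3 * Q ^ 2) * t) = (1 - q ^ 3 * Q ^ 2) * (⅟q * t) :=
    swap _ _ (cmqd2.invOf_left.eq)
  have iqd2' : ⅟q * (1 - q ^ 3 * Q ^ 2) = (1 - q ^ 3 * Q ^ 2) * ⅟q := cmqd2.invOf_left.eq
  have iqE1 : ∀ t, ⅟q * (E₁ * t) = E₁ * (⅟q * t) := swap _ E₁ (cE1iq.symm)
  have iqE1' : ⅟q * E₁ = E₁ * ⅟q := cE1iq.symm
  -- power expansions
  have pw2 : ∀ x : A, x ^ 2 = x * x := fun x => sq x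
  have pw3 : ∀ x : A, x ^ 3 = x * (x * x) := fun x => by
    rw [pow_succ, pw2, mul_assoc]
  have hE2 : E ^ 2 = E * E := sq E
  refine ⟨⅟q * ⅟Q * ⅟(1 - q * Q ^ 2) * ⅟(1 - q ^ 3 * Q ^ 2) *
      (E - q * Q * E * E₁ - q * q * q * Q * Q₁ * E - q * q * Q * Q * E₁ - q * Q * Q * E - q * q * q * q * Q * Q * Q₁ + q * q * q * Q * Q * Q + q * q * Q * Q * Q * E * E₁ + q * q * q * q * Q * Q * Q * Q₁ * E + q * q * q * q * q * Q * Q * Q * Q * E₁ + q * q * q * q * q * q * q * Q * Q * Q * Q * Q₁ - q * q * q * q * q * q * Q * Q * Q * Q * Q),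
    ⅟q * ⅟Q * ⅟(1 - q * Q ^ 2) * ⅟(1 - q ^ 3 * Q ^ 2) *
      (-(⅟q * E * E) - q * Q * E - q * q * Q * E + q * Q * E * E - q * q * q * Q * Q + q * q * Q * Q * E + q * q * q * Q * Q * E + Q * Q * E * E + q * q * q * Q * Q * Q + q * q * q * Q * Q * Q * E + q * q * q * q * Q * Q * Q * E - q * q * Q * Q * Q * E * E + q * q * q * q * q * q * Q * Q * Q * Q - q * q * q * q * Q * Q * Q * Q * E - q * q * q * q * q * Q * Q * Q * Q * E - q * q * q * q * q * q * Q * Q * Q * Q * Q), ?_⟩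
  have key :
      (E - q * Q * E * E₁ - q * q * q * Q * Q₁ * E - q * q * Q * Q * E₁ - q * Q * Q * E - q * q * q * q * Q * Q * Q₁ + q * q * q * Q * Q * Q + q * q * Q * Q * Q * E * E₁ + q * q * q * q * Q * Q * Q * Q₁ * E + q * q * q * q * q * Q * Q * Q * Q * E₁ + q * q * q * q * q * q * q * Q * Q * Q * Q * Q₁ - q * q * q * q * q * q * Q * Q * Q * Q * Q) *
          ((E + q * Q) * Q₁ * (Q - 1) - (1 + Q * E) * (Q - 1)) +
        (-(⅟q * E * E) - q * Q * E - q * q * Q * E + q * Q * E * E - q * q * q * Q * Q + q * q * Q * Q * E + q * q * q * Q * Q * E + Q * Q * E * E + q * q * q * Q * Q * Q + q * q * q * Q * Q * Q * E + q * q * q * q * Q * Q * Q * E - q * q * Q * Q * Q * E * E + q * q * q * q * q * q * Q * Q * Q * Q - q * q * q * q * Q * Q * Q * Q * E - q * q * q * q * q * Q * Q * Q * Q * E - q * q * q * q * q * q * Q * Q * Q * Q * Q) *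
          (q ^ 2 * Q₁ ^ 2 * Q + q * Q₁ * (-Q ^ 2 + Q * E₁ - 1) + Q) =
      q * q * Q * Q * (1 - q * Q ^ 2) * E₁ * E * E * (Q - 1) +
        q * Q * (1 - q * Q ^ 2) * E₁ * E * (Q - 1) +
        q * Q * (1 - q ^ 3 * Q ^ 2) * E₁ * E * (Q - 1) +
        q * q * Q * Q * (1 - q * Q ^ 2) * (1 - q ^ 3 * Q ^ 2) * E * (Q - 1) -
        q * Q * (1 - q * Q ^ 2) * (1 - q ^ 3 * Q ^ 2) * E₁ * E * (Q - 1) -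
        (1 - q * Q ^ 2) * (1 - q ^ 3 * Q ^ 2) * E * (Q - 1) +
        q * q * Q * Q * (1 - q ^ 3 * Q ^ 2) * E₁ * (Q - 1) := by
    simp only [pw2, pw3, mul_add, add_mul, mul_sub, sub_mul, mul_one, one_mul, mul_neg,
      neg_mul, mul_assoc, sQq, sQ1q, sEq, sE1q, sQ1Q, sEQ1, sE1Q, sE1E, sEQ, sE1Q1,
      cQq, cQ1q, cEq, cE1q, cQ1Q, sEQ1, cE1E, cEQ, cE1Q1, hEQ₁, hE₁Q,
      sQiq, sQ1iq, sEiq, sE1iq, cQiq, cQ1iq, cEiq, cE1iq,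
      invOf_mul_cancel_left, mul_invOf_cancel_left, invOf_mul_self, mul_invOf_self]
    abel
  calc
    (q * Q * ⅟(1 - q ^ 3 * Q ^ 2) * E₁ * E ^ 2 +
          (⅟(1 - q ^ 3 * Q ^ 2) * E₁ + ⅟(1 - q * Q ^ 2) * E₁ + q * Q - E₁ -
            ⅟q * ⅟Q) * E +
          q * Q * ⅟(1 - q * Q ^ 2) * E₁) * (Q - 1)
        = q * Q * ⅟(1 - q ^ 3 * Q ^ 2) * E₁ * E ^ 2 * (Q - 1) +
            ⅟(1 - q ^ 3 * Q ^ 2) * E₁ * E * (Q - 1) +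
            ⅟(1 - q * Q ^ 2) * E₁ * E * (Q - 1) +
            q * Q * E * (Q - 1) -
            E₁ * E * (Q - 1) -
            ⅟q * ⅟Q * E * (Q - 1) +
            q * Q * ⅟(1 - q * Q ^ 2) * E₁ * (Q - 1) := by noncomm_ring
    _ = ⅟q * ⅟Q * ⅟(1 - q * Q ^ 2) * ⅟(1 - q ^ 3 * Q ^ 2) *
            (q * q * Q * Q * (1 - q * Q ^ 2) * E₁ * E * E * (Q - 1)) +
          ⅟q * ⅟Q * ⅟(1 - q * Q ^ 2) * ⅟(1 - q ^ 3 * Q ^ 2) *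
            (q * Q * (1 - q * Q ^ 2) * E₁ * E * (Q - 1)) +
          ⅟q * ⅟Q * ⅟(1 - q * Q ^ 2) * ⅟(1 - q ^ 3 * Q ^ 2) *
            (q * Q * (1 - q ^ 3 * Q ^ 2) * E₁ * E * (Q - 1)) +
          ⅟q * ⅟Q * ⅟(1 - q * Q ^ 2) * ⅟(1 - q ^ 3 * Q ^ 2) *
            (q * q * Q * Q * (1 - q * Q ^ 2) * (1 - q ^ 3 * Q ^ 2) * E * (Q - 1)) -
          ⅟q * ⅟Q * ⅟(1 - q * Q ^ 2) * ⅟(1 - q ^ 3 * Q ^ 2) *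
            (q * Q * (1 - q * Q ^ 2) * (1 - q ^ 3 * Q ^ 2) * E₁ * E * (Q - 1)) -
          ⅟q * ⅟Q * ⅟(1 - q * Q ^ 2) * ⅟(1 - q ^ 3 * Q ^ 2) *
            ((1 - q * Q ^ 2) * (1 - q ^ 3 * Q ^ 2) * E * (Q - 1)) +
          ⅟q * ⅟Q * ⅟(1 - q * Q ^ 2) * ⅟(1 - q ^ 3 * Q ^ 2) *
            (q * q * Q * Q * (1 - q ^ 3 * Q ^ 2) * E₁ * (Q - 1)) := by
      rw [hE2]
      simp only [mul_assoc, mul_one, one_mul,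
        i2q, i2q', i2Q, i2Q', i2E1, i2E1', i2d3, i2d3',
        i3q, i3q', i3Q, i3Q', i3E1, i3E1', i3d2, i3d2',
        iQq, iQq', iQd3, iQd3', iQd2, iQd2', iQE1, iQE1',
        iqQ, iqQ', iqd3, iqd3', iqd2, iqd2', iqE1, iqE1',
        invOf_mul_cancel_left, mul_invOf_cancel_left, invOf_mul_self, mul_invOf_self]
    _ = ⅟q * ⅟Q * ⅟(1 - q * Q ^ 2) * ⅟(1 - q ^ 3 * Q ^ 2) *
          (q * q * Q * Q * (1 - q * Q ^ 2) * E₁ * E * E * (Q - 1) +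
            q * Q * (1 - q * Q ^ 2) * E₁ * E * (Q - 1) +
            q * Q * (1 - q ^ 3 * Q ^ 2) * E₁ * E * (Q - 1) +
            q * q * Q * Q * (1 - q * Q ^ 2) * (1 - q ^ 3 * Q ^ 2) * E * (Q - 1) -
            q * Q * (1 - q * Q ^ 2) * (1 - q ^ 3 * Q ^ 2) * E₁ * E * (Q - 1) -
            (1 - q * Q ^ 2) * (1 - q ^ 3 * Q ^ 2) * E * (Q - 1) +
            q * q * Q * Q * (1 - q ^ 3 * Q ^ 2) * E₁ * (Q - 1)) := by
      simp only [mul_add, mul_sub]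
    _ = ⅟q * ⅟Q * ⅟(1 - q * Q ^ 2) * ⅟(1 - q ^ 3 * Q ^ 2) *
          ((E - q * Q * E * E₁ - q * q * q * Q * Q₁ * E - q * q * Q * Q * E₁ - q * Q * Q * E - q * q * q * q * Q * Q * Q₁ + q * q * q * Q * Q * Q + q * q * Q * Q * Q * E * E₁ + q * q * q * q * Q * Q * Q * Q₁ * E + q * q * q * q * q * Q * Q * Q * Q * E₁ + q * q * q * q * q * q * q * Q * Q * Q * Q * Q₁ - q * q * q * q * q * q * Q * Q * Q * Q * Q) *
              ((E + q * Q) * Q₁ * (Q - 1) - (1 + Q * E) * (Q - 1)) +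
            (-(⅟q * E * E) - q * Q * E - q * q * Q * E + q * Q * E * E - q * q * q * Q * Q + q * q * Q * Q * E + q * q * q * Q * Q * E + Q * Q * E * E + q * q * q * Q * Q * Q + q * q * q * Q * Q * Q * E + q * q * q * q * Q * Q * Q * E - q * q * Q * Q * Q * E * E + q * q * q * q * q * q * Q * Q * Q * Q - q * q * q * q * Q * Q * Q * Q * E - q * q * q * q * q * Q * Q * Q * Q * E - q * q * q * q * q * q * Q * Q * Q * Q * Q) *
              (q ^ 2 * Q₁ ^ 2 * Q + q * Q₁ * (-Q ^ 2 + Q * E₁ - 1) + Q)) := by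
      rw [key]
    _ = ⅟q * ⅟Q * ⅟(1 - q * Q ^ 2) * ⅟(1 - q ^ 3 * Q ^ 2) *
          (E - q * Q * E * E₁ - q * q * q * Q * Q₁ * E - q * q * Q * Q * E₁ - q * Q * Q * E - q * q * q * q * Q * Q * Q₁ + q * q * q * Q * Q * Q + q * q * Q * Q * Q * E * E₁ + q * q * q * q * Q * Q * Q * Q₁ * E + q * q * q * q * q * Q * Q * Q * Q * E₁ + q * q * q * q * q * q * q * Q * Q * Q * Q * Q₁ - q * q * q * q * q * q * Q * Q * Q * Q * Q) *
          ((E + q * Q) * Q₁ * (Q - 1) - (1 + Q * E) * (Q - 1)) +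
        ⅟q * ⅟Q * ⅟(1 - q * Q ^ 2) * ⅟(1 - q ^ 3 * Q ^ 2) *
          (-(⅟q * E * E) - q * Q * E - q * q * Q * E + q * Q * E * E - q * q * q * Q * Q + q * q * Q * Q * E + q * q * q * Q * Q * E + Q * Q * E * E + q * q * q * Q * Q * Q + q * q * q * Q * Q * Q * E + q * q * q * q * Q * Q * Q * E - q * q * Q * Q * Q * E * E + q * q * q * q * q * q * Q * Q * Q * Q - q * q * q * q * Q * Q * Q * Q * E - q * q * q * q * q * Q * Q * Q * Q * E - q * q * q * q * q * q * Q * Q * Q * Q * Q) *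
          (q ^ 2 * Q₁ ^ 2 * Q + q * Q₁ * (-Q ^ 2 + Q * E₁ - 1) + Q) := by
      rw [mul_add, ← mul_assoc, ← mul_assoc]
end
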